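/- In a dagger category, let x : A ⟶ A be self-adjoint, i.e. x† = x. Then a map d : A ⟶ A is a †-Drazin inverse of x if and only if d is a Drazin inverse of x. In particular, a self-adjoint map is †-Drazin if and only if it is Drazin, and in that case its Drazin inverse and †-Drazin inverse coincide and are self-adjoint. -/
import Mathlib

open CategoryTheory

universe v u

/-- A dagger on a category: an identity-on-objects contravariant involution. -/
structure Dagger (C : Type u) [Category.{v} C] where
  dag : ∀ {X Y : C}, (X ⟶ Y) → (Y ⟶ X)
  dag_id : ∀ X : C, dag (𝟙 X) = 𝟙 X
  dag_comp : ∀ {X Y Z : C} (f : X ⟶ Y) (g : Y ⟶ Z), dag (f ≫ g) = dag g ≫ dag f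
  dag_dag : ∀ {X Y : C} (f : X ⟶ Y), dag (dag f) = f

/-- Iterated composition power of an endomorphism, with `cpow x 0 = 𝟙 A`. -/
def cpow {C : Type u} [Category.{v} C] {A : C} (x : A ⟶ A) : ℕ → (A ⟶ A)
  | 0 => 𝟙 A
  | n + 1 => cpow x n ≫ x

/-- `p` is a †-Drazin inverse of `f`. -/
def IsDagDrazinInv {C : Type u} [Category.{v} C] (D : Dagger C)
    {A B : C} (f : A ⟶ B) (p : B ⟶ A) : Prop :=
  (∃ k : ℕ, cpow (f ≫ D.dag f) k ≫ f ≫ p = cpow (f ≫ D.dag f) k ∧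
    p ≫ f ≫ cpow (D.dag f ≫ f) k = cpow (D.dag f ≫ f) k) ∧
  p ≫ f ≫ p = p ∧
  D.dag (f ≫ p) = f ≫ p ∧
  D.dag (p ≫ f) = p ≫ f

/-- `d` is a Drazin inverse of the endomorphism `x`. -/
def IsDrazinInv {C : Type u} [Category.{v} C] {A : C} (x d : A ⟶ A) : Prop :=
  (∃ k : ℕ, cpow x (k + 1) ≫ d = cpow x k) ∧
  d ≫ x ≫ d = d ∧
  x ≫ d = d ≫ x


namespace DrazinAux

variable {C : Type u} [Category.{v} C] {A : C}

lemma cpow_zero (x : A ⟶ A) : cpow x 0 = 𝟙 A := rfl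

lemma cpow_succ (x : A ⟶ A) (n : ℕ) : cpow x (n + 1) = cpow x n ≫ x := rfl

lemma cpow_succ' (x : A ⟶ A) (n : ℕ) : cpow x (n + 1) = x ≫ cpow x n := by
  induction n with
  | zero => simp [cpow]
  | succ n ih => rw [cpow_succ x (n+1), ih, Category.assoc, ← cpow_succ, ih]

lemma cpow_add (x : A ⟶ A) (m n : ℕ) : cpow x (m + n) = cpow x m ≫ cpow x n := by
  induction n with
  | zero => simp [cpow]
  | succ n ih =>
    rw [show m + (n+1) = (m+n)+1 from rfl, cpow_succ, ih, cpow_succ, Category.assoc]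

lemma comm_cpow {x c : A ⟶ A} (h : c ≫ x = x ≫ c) (n : ℕ) :
    c ≫ cpow x n = cpow x n ≫ c := by
  induction n with
  | zero => simp [cpow]
  | succ n ih =>
    rw [cpow_succ, ← Category.assoc, ih, Category.assoc, h, Category.assoc]

lemma dag_cpow (D : Dagger C) {x : A ⟶ A} (hx : D.dag x = x) (n : ℕ) :
    D.dag (cpow x n) = cpow x n := by
  induction n with
  | zero => rw [cpow_zero, D.dag_id]
  | succ n ih => rw [cpow_succ, D.dag_comp, hx, ih, ← cpow_succ', cpow_succ]

lemma cpow_sq (x : A ⟶ A) (n : ℕ) : cpow (x ≫ x) n = cpow x (2 * n) := by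
  induction n with
  | zero => rfl
  | succ n ih =>
    have h : 2 * (n + 1) = (2 * n + 1) + 1 := by omega
    rw [cpow_succ, ih, h, cpow_succ x (2*n+1), cpow_succ x (2*n), Category.assoc]

section Drazin

variable {x d : A ⟶ A} {k : ℕ}

lemma L1 (h3 : x ≫ d = d ≫ x) (h1 : cpow x (k+1) ≫ d = cpow x k)
    {K : ℕ} (hK : k ≤ K) : cpow x (K+1) ≫ d = cpow x K := by
  obtain ⟨m, rfl⟩ := Nat.exists_eq_add_of_le hK
  clear hK
  induction m with
  | zero => simpa using h1
  | succ m ih =>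
    have h : k + (m+1) + 1 = (k + m + 1) + 1 := by omega
    rw [h, cpow_succ' x (k+m+1), Category.assoc, ih, ← cpow_succ']
    exact congrArg (cpow x) (by omega)

/-- d commutes with powers of x. -/
lemma dcomm (h3 : x ≫ d = d ≫ x) (n : ℕ) : d ≫ cpow x n = cpow x n ≫ d :=
  comm_cpow h3.symm n

lemma cpow_comm_cpow (h3 : x ≫ d = d ≫ x) (m n : ℕ) :
    cpow x m ≫ cpow d n = cpow d n ≫ cpow x m :=
  comm_cpow (dcomm h3 m).symm n

/-- d = d^{j+1} x^j -/
lemma Cfact (h2 : d ≫ x ≫ d = d) (h3 : x ≫ d = d ≫ x) (j : ℕ) :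
    cpow d (j+1) ≫ cpow x j = d := by
  have h2a : d ≫ d ≫ x = d := by rw [← h3]; simpa [Category.assoc] using h2
  induction j with
  | zero => simp [cpow]
  | succ j ih =>
    rw [cpow_succ d (j+1), cpow_succ' x j, Category.assoc]
    calc cpow d (j+1) ≫ d ≫ x ≫ cpow x j
        = (cpow d j ≫ (d ≫ d ≫ x)) ≫ cpow x j := by
          rw [cpow_succ d j]; simp [Category.assoc]
      _ = (cpow d j ≫ d) ≫ cpow x j := by rw [h2a]
      _ = d := ih

/-- d = x^j d^{j+1} -/
lemma Cfact' (h2 : d ≫ x ≫ d = d) (h3 : x ≫ d = d ≫ x) (j : ℕ) :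
    cpow x j ≫ cpow d (j+1) = d := by
  rw [cpow_comm_cpow h3, Cfact h2 h3]

/-- x^{k+j} d^j = x^k -/
lemma Dfact (h3 : x ≫ d = d ≫ x) (h1 : cpow x (k+1) ≫ d = cpow x k) (j : ℕ) :
    cpow x (k + j) ≫ cpow d j = cpow x k := by
  induction j with
  | zero => simp [cpow]
  | succ j ih =>
    have hh : k + (j + 1) = (k + j) + 1 := by omega
    rw [hh, cpow_succ' d j, ← Category.assoc, L1 h3 h1 (by omega : k ≤ k + j), ih]

/-- d^{j+1} x^{j+1} = d x -/
lemma C2 (h2 : d ≫ x ≫ d = d) (h3 : x ≫ d = d ≫ x) (j : ℕ) :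
    cpow d (j+1) ≫ cpow x (j+1) = d ≫ x := by
  rw [cpow_succ x j, ← Category.assoc, Cfact h2 h3]

/-- x^{j+1} d^{j+1} = x d -/
lemma C2' (h2 : d ≫ x ≫ d = d) (h3 : x ≫ d = d ≫ x) (j : ℕ) :
    cpow x (j+1) ≫ cpow d (j+1) = x ≫ d := by
  rw [cpow_succ' x j, Category.assoc, Cfact' h2 h3]

/-- d^{k+1} x^{2k+1} = x^k -/
lemma Efact (h1 : cpow x (k+1) ≫ d = cpow x k)
    (h2 : d ≫ x ≫ d = d) (h3 : x ≫ d = d ≫ x) :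
    cpow d (k+1) ≫ cpow x (2*k+1) = cpow x k := by
  have hsplit : 2*k+1 = (k+1) + k := by omega
  rw [hsplit, cpow_add x (k+1) k, ← Category.assoc, C2 h2 h3, Category.assoc,
    ← cpow_succ', dcomm h3, h1]

/-- Drazin inverses double-commute. -/
lemma doubleComm (h1 : cpow x (k+1) ≫ d = cpow x k)
    (h2 : d ≫ x ≫ d = d) (h3 : x ≫ d = d ≫ x)
    {c : A ⟶ A} (hc : c ≫ x = x ≫ c) : c ≫ d = d ≫ c := by
  have key : cpow x (2*k+1) ≫ cpow d (k+1) = cpow x k := by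
    have := Dfact h3 h1 (k+1)
    rwa [show k + (k+1) = 2*k+1 by omega] at this
  symm
  calc d ≫ c
      = (cpow d (k+1) ≫ cpow x k) ≫ c := by rw [Cfact h2 h3]
    _ = cpow d (k+1) ≫ (cpow x k ≫ c) := by rw [Category.assoc]
    _ = cpow d (k+1) ≫ (c ≫ cpow x k) := by rw [← comm_cpow hc]
    _ = cpow d (k+1) ≫ (c ≫ cpow x (2*k+1) ≫ cpow d (k+1)) := by rw [key]
    _ = cpow d (k+1) ≫ ((c ≫ cpow x (2*k+1)) ≫ cpow d (k+1)) := by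
          rw [Category.assoc]
    _ = cpow d (k+1) ≫ ((cpow x (2*k+1) ≫ c) ≫ cpow d (k+1)) := by
          rw [comm_cpow hc]
    _ = (cpow d (k+1) ≫ cpow x (2*k+1)) ≫ c ≫ cpow d (k+1) := by
          simp only [Category.assoc]
    _ = cpow x k ≫ c ≫ cpow d (k+1) := by rw [Efact h1 h2 h3]
    _ = (cpow x k ≫ c) ≫ cpow d (k+1) := by rw [Category.assoc]
    _ = (c ≫ cpow x k) ≫ cpow d (k+1) := by rw [comm_cpow hc]
    _ = c ≫ (cpow x k ≫ cpow d (k+1)) := by rw [Category.assoc]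
    _ = c ≫ d := by rw [Cfact' h2 h3]

/-- Uniqueness of Drazin inverses. -/
lemma drazin_unique {e : A ⟶ A} {l : ℕ}
    (h1 : cpow x (k+1) ≫ d = cpow x k) (h2 : d ≫ x ≫ d = d) (h3 : x ≫ d = d ≫ x)
    (g1 : cpow x (l+1) ≫ e = cpow x l) (g2 : e ≫ x ≫ e = e) (g3 : x ≫ e = e ≫ x) :
    d = e := by
  set K := k + l with hK
  have hdK : cpow x (K+1) ≫ d = cpow x K := L1 h3 h1 (by omega)
  have heK : cpow x (K+1) ≫ e = cpow x K := L1 g3 g1 (by omega)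
  have hd : d = d ≫ x ≫ e := by
    calc d = cpow d (K+1) ≫ cpow x K := (Cfact h2 h3 K).symm
      _ = cpow d (K+1) ≫ (cpow x (K+1) ≫ e) := by rw [heK]
      _ = (cpow d (K+1) ≫ cpow x (K+1)) ≫ e := by rw [Category.assoc]
      _ = (d ≫ x) ≫ e := by rw [C2 h2 h3]
      _ = d ≫ x ≫ e := by rw [Category.assoc]
  have he : e = d ≫ x ≫ e := by
    calc e = cpow x K ≫ cpow e (K+1) := (Cfact' g2 g3 K).symm
      _ = (d ≫ cpow x (K+1)) ≫ cpow e (K+1) := by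
            rw [dcomm h3 (K+1), hdK]
      _ = d ≫ (cpow x (K+1) ≫ cpow e (K+1)) := by simp only [Category.assoc]
      _ = d ≫ (x ≫ e) := by rw [C2' g2 g3]
  rw [hd, ← he]

lemma dag_of_drazin (D : Dagger C) {x d : A ⟶ A} (hx : D.dag x = x)
    (hd : IsDrazinInv x d) : D.dag d = d := by
  obtain ⟨⟨k, h1⟩, h2, h3⟩ := hd
  have hq3 : x ≫ D.dag d = D.dag d ≫ x := by
    have e1 : D.dag (x ≫ d) = D.dag d ≫ x := by rw [D.dag_comp, hx]
    have e2 : D.dag (d ≫ x) = x ≫ D.dag d := by rw [D.dag_comp, hx]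
    rw [← e1, ← e2, ← h3]
  have hq1 : cpow x (k+1) ≫ D.dag d = cpow x k := by
    have h := congrArg D.dag h1
    rw [D.dag_comp, dag_cpow D hx, dag_cpow D hx, comm_cpow hq3.symm] at h
    exact h
  have hq2 : D.dag d ≫ x ≫ D.dag d = D.dag d := by
    have h := congrArg D.dag h2
    rw [D.dag_comp, D.dag_comp, hx] at h
    simpa [Category.assoc] using h
  exact drazin_unique hq1 hq2 hq3 h1 h2 h3

lemma drazin_of_dagDrazin (D : Dagger C) {x p : A ⟶ A} (hx : D.dag x = x)
    (hp : IsDagDrazinInv D x p) : IsDrazinInv x p := by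
  obtain ⟨⟨k, h1a, h1b⟩, h2, h3, h4⟩ := hp
  rw [hx] at h1a h1b
  rw [cpow_sq] at h1a h1b
  have ha : cpow x (2*k+1) ≫ p = cpow x (2*k) := by
    rw [cpow_succ, Category.assoc]; exact h1a
  have hb : p ≫ cpow x (2*k+1) = cpow x (2*k) := by
    rw [cpow_succ']; exact h1b
  have hq_x : D.dag p ≫ x = x ≫ p := by
    conv_rhs => rw [← h3]
    rw [D.dag_comp, hx]
  have hx_q : x ≫ D.dag p = p ≫ x := by
    conv_rhs => rw [← h4]
    rw [D.dag_comp, hx]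
  have hqa : cpow x (2*k+1) ≫ D.dag p = cpow x (2*k) := by
    have h := congrArg D.dag hb
    rwa [D.dag_comp, dag_cpow D hx, dag_cpow D hx] at h
  have hx2p : (x ≫ x) ≫ p = p ≫ (x ≫ x) := by
    calc (x ≫ x) ≫ p = x ≫ (x ≫ p) := by rw [Category.assoc]
      _ = x ≫ (D.dag p ≫ x) := by rw [hq_x]
      _ = (x ≫ D.dag p) ≫ x := by rw [Category.assoc]
      _ = (p ≫ x) ≫ x := by rw [hx_q]
      _ = p ≫ (x ≫ x) := by rw [Category.assoc]
  have hx2q : (x ≫ x) ≫ D.dag p = D.dag p ≫ (x ≫ x) := by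
    calc (x ≫ x) ≫ D.dag p = x ≫ (x ≫ D.dag p) := by rw [Category.assoc]
      _ = x ≫ (p ≫ x) := by rw [hx_q]
      _ = (x ≫ p) ≫ x := by rw [Category.assoc]
      _ = (D.dag p ≫ x) ≫ x := by rw [hq_x]
      _ = D.dag p ≫ (x ≫ x) := by rw [Category.assoc]
  have hkey : x ≫ D.dag p ≫ p = p := by
    rw [← Category.assoc, hx_q, Category.assoc, h2]
  have b1 : cpow (x ≫ x) (k+1) ≫ (D.dag p ≫ p) = cpow (x ≫ x) k := by
    rw [cpow_sq, cpow_sq, show 2*(k+1) = (2*k+1)+1 by omega, cpow_succ' x (2*k+1)]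
    calc (x ≫ cpow x (2*k+1)) ≫ (D.dag p ≫ p)
        = x ≫ (cpow x (2*k+1) ≫ D.dag p) ≫ p := by simp only [Category.assoc]
      _ = x ≫ cpow x (2*k) ≫ p := by rw [hqa]
      _ = (x ≫ cpow x (2*k)) ≫ p := by rw [Category.assoc]
      _ = cpow x (2*k+1) ≫ p := by rw [← cpow_succ']
      _ = cpow x (2*k) := ha
  have b3 : (x ≫ x) ≫ (D.dag p ≫ p) = (D.dag p ≫ p) ≫ (x ≫ x) := by
    calc (x ≫ x) ≫ (D.dag p ≫ p) = ((x ≫ x) ≫ D.dag p) ≫ p := by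
          simp only [Category.assoc]
      _ = (D.dag p ≫ (x ≫ x)) ≫ p := by rw [hx2q]
      _ = D.dag p ≫ ((x ≫ x) ≫ p) := by simp only [Category.assoc]
      _ = D.dag p ≫ (p ≫ (x ≫ x)) := by rw [hx2p]
      _ = (D.dag p ≫ p) ≫ (x ≫ x) := by simp only [Category.assoc]
  have b2 : (D.dag p ≫ p) ≫ (x ≫ x) ≫ (D.dag p ≫ p) = D.dag p ≫ p := by
    calc (D.dag p ≫ p) ≫ (x ≫ x) ≫ (D.dag p ≫ p)
        = D.dag p ≫ p ≫ x ≫ (x ≫ D.dag p ≫ p) := by simp only [Category.assoc]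
      _ = D.dag p ≫ p ≫ x ≫ p := by rw [hkey]
      _ = D.dag p ≫ p := by rw [h2]
  have hxb : x ≫ (D.dag p ≫ p) = (D.dag p ≫ p) ≫ x :=
    doubleComm b1 b2 b3 (Category.assoc x x x).symm
  have hp' : x ≫ (D.dag p ≫ p) = p := by
    conv_rhs => rw [← h2]
    rw [← Category.assoc, hx_q, Category.assoc]
  have hcomm : x ≫ p = p ≫ x := by
    calc x ≫ p = x ≫ (x ≫ (D.dag p ≫ p)) := by rw [hp']
      _ = x ≫ ((D.dag p ≫ p) ≫ x) := by rw [hxb]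
      _ = (x ≫ (D.dag p ≫ p)) ≫ x := by simp only [Category.assoc]
      _ = p ≫ x := by rw [hp']
  exact ⟨⟨2*k, ha⟩, h2, hcomm⟩

lemma dagDrazin_of_drazin (D : Dagger C) {x d : A ⟶ A} (hx : D.dag x = x)
    (hd : IsDrazinInv x d) : IsDagDrazinInv D x d := by
  have hsd : D.dag d = d := dag_of_drazin D hx hd
  obtain ⟨⟨k, h1⟩, h2, h3⟩ := hd
  refine ⟨⟨k, ?_, ?_⟩, h2, ?_, ?_⟩
  · rw [hx, cpow_sq, ← Category.assoc, ← cpow_succ]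
    exact L1 h3 h1 (by omega)
  · rw [hx, cpow_sq, ← cpow_succ', dcomm h3]
    exact L1 h3 h1 (by omega)
  · rw [D.dag_comp, hx, hsd, h3]
  · rw [D.dag_comp, hx, hsd, h3]

end Drazin

end DrazinAux

/-- For a self-adjoint map, †-Drazin inverses and Drazin inverses coincide, and
any such inverse is self-adjoint. -/
theorem selfAdjoint_dagDrazin_iff_drazin {C : Type u} [Category.{v} C] (D : Dagger C)
    {A : C} (x : A ⟶ A) (hx : D.dag x = x) :
    (∀ d : A ⟶ A, IsDagDrazinInv D x d ↔ IsDrazinInv x d) ∧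
    ((∃ d, IsDagDrazinInv D x d) ↔ (∃ d, IsDrazinInv x d)) ∧
    (∀ d : A ⟶ A, IsDrazinInv x d → D.dag d = d) := by
  have hiff : ∀ d : A ⟶ A, IsDagDrazinInv D x d ↔ IsDrazinInv x d := fun d =>
    ⟨fun h => DrazinAux.drazin_of_dagDrazin D hx h,
     fun h => DrazinAux.dagDrazin_of_drazin D hx h⟩
  exact ⟨hiff, exists_congr hiff, fun d hd => DrazinAux.dag_of_drazin D hx hd⟩
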